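/- Let (X,d) be a metric space, τ > 0, and let F : X → ℝ be bounded from below. Let (u_k)_{k∈ℕ} be a minimizing movement sequence for F with step size τ, i.e. for every k and every u ∈ X: F(u_{k+1}) + d(u_{k+1}, u_k)²/(2τ) ≤ F(u) + d(u, u_k)²/(2τ). Then for all natural numbers l ≤ k: d(u_l, u_k)² ≤ 2τ (k − l) ( F(u₀) − ⨅_{n∈ℕ} F(u_n) ). -/

import Mathlib

/-- Discrete Hölder-type estimate for a minimizing movement sequence. -/
theorem minimizing_movement_discrete_hoelder {X : Type*} [MetricSpace X]
    (τ : ℝ) (hτ : 0 < τ) (F : X → ℝ) (hF : BddBelow (Set.range F)) (u : ℕ → X)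
    (hmin : ∀ k, ∀ v, F (u (k + 1)) + dist (u (k + 1)) (u k) ^ 2 / (2 * τ)
      ≤ F v + dist v (u k) ^ 2 / (2 * τ)) :
    ∀ l k : ℕ, l ≤ k →
      dist (u l) (u k) ^ 2 ≤ 2 * τ * ((k : ℝ) - (l : ℝ)) * (F (u 0) - ⨅ n : ℕ, F (u n)) := by
  have hτ2 : (0 : ℝ) < 2 * τ := by linarith
  -- single-step estimate
  have hstep : ∀ i, dist (u (i + 1)) (u i) ^ 2 ≤ 2 * τ * (F (u i) - F (u (i + 1))) := by
    intro i
    have h := hmin i (u i)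
    simp only [dist_self] at h
    have : dist (u (i + 1)) (u i) ^ 2 / (2 * τ) ≤ F (u i) - F (u (i + 1)) := by
      have h0 : (0:ℝ) ^ 2 / (2 * τ) = 0 := by ring
      linarith [h, h0]
    calc dist (u (i + 1)) (u i) ^ 2
        = dist (u (i + 1)) (u i) ^ 2 / (2 * τ) * (2 * τ) := by field_simp
      _ ≤ (F (u i) - F (u (i + 1))) * (2 * τ) :=
          mul_le_mul_of_nonneg_right this hτ2.le
      _ = 2 * τ * (F (u i) - F (u (i + 1))) := by ring
  have hmono : ∀ i, F (u (i + 1)) ≤ F (u i) := by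
    intro i
    have := hstep i
    nlinarith [sq_nonneg (dist (u (i + 1)) (u i))]
  have hanti : ∀ m n : ℕ, m ≤ n → F (u n) ≤ F (u m) := by
    intro m n h
    induction n with
    | zero => simp_all
    | succ n ih =>
      rcases Nat.lt_or_ge m (n + 1) with h' | h'
      · exact le_trans (hmono n) (ih (Nat.lt_succ_iff.mp h'))
      · have : m = n + 1 := le_antisymm h h'
        simp [this]
  -- infimum facts
  have hbdd : BddBelow (Set.range fun n => F (u n)) :=
    hF.mono (Set.range_comp_subset_range u F)
  have hinf : ∀ n, (⨅ n : ℕ, F (u n)) ≤ F (u n) := fun n => ciInf_le hbdd n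
  intro l k hlk
  obtain ⟨m, rfl⟩ := Nat.exists_eq_add_of_le hlk
  -- triangle inequality
  have htri : dist (u l) (u (l + m)) ≤ ∑ j ∈ Finset.range m, dist (u (l + j)) (u (l + j + 1)) :=
    dist_le_range_sum_dist (fun j => u (l + j)) m
  -- Cauchy-Schwarz
  have hcs : (∑ j ∈ Finset.range m, dist (u (l + j)) (u (l + j + 1))) ^ 2
      ≤ m * ∑ j ∈ Finset.range m, dist (u (l + j)) (u (l + j + 1)) ^ 2 := by
    simpa using sq_sum_le_card_mul_sum_sq
      (s := Finset.range m) (f := fun j => dist (u (l + j)) (u (l + j + 1)))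
  -- sum of squared distances
  have hsum : ∑ j ∈ Finset.range m, dist (u (l + j)) (u (l + j + 1)) ^ 2
      ≤ 2 * τ * (F (u l) - F (u (l + m))) := by
    have : ∑ j ∈ Finset.range m, dist (u (l + j)) (u (l + j + 1)) ^ 2
        ≤ ∑ j ∈ Finset.range m, 2 * τ * (F (u (l + j)) - F (u (l + j + 1))) := by
      refine Finset.sum_le_sum fun j _ => ?_
      rw [dist_comm]
      exact hstep (l + j)
    refine le_trans this ?_
    rw [← Finset.mul_sum]
    have htel : ∑ j ∈ Finset.range m, (F (u (l + j)) - F (u (l + j + 1)))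
        = F (u l) - F (u (l + m)) := by
      have := Finset.sum_range_sub' (fun j => F (u (l + j))) m
      simpa [add_assoc] using this
    rw [htel]
  have hdistsum_nonneg : (0:ℝ) ≤ ∑ j ∈ Finset.range m, dist (u (l + j)) (u (l + j + 1)) :=
    Finset.sum_nonneg fun j _ => dist_nonneg
  have key : dist (u l) (u (l + m)) ^ 2
      ≤ m * (2 * τ * (F (u l) - F (u (l + m)))) := by
    calc dist (u l) (u (l + m)) ^ 2
        ≤ (∑ j ∈ Finset.range m, dist (u (l + j)) (u (l + j + 1))) ^ 2 :=
          pow_le_pow_left₀ dist_nonneg htri 2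
      _ ≤ m * ∑ j ∈ Finset.range m, dist (u (l + j)) (u (l + j + 1)) ^ 2 := hcs
      _ ≤ m * (2 * τ * (F (u l) - F (u (l + m)))) := by
          exact mul_le_mul_of_nonneg_left hsum (Nat.cast_nonneg m)
  have h1 : F (u l) ≤ F (u 0) := hanti 0 l (Nat.zero_le l)
  have h2 : (⨅ n : ℕ, F (u n)) ≤ F (u (l + m)) := hinf (l + m)
  have hcast : ((l + m : ℕ) : ℝ) - (l : ℝ) = (m : ℝ) := by push_cast; ring
  rw [hcast]
  calc dist (u l) (u (l + m)) ^ 2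
      ≤ m * (2 * τ * (F (u l) - F (u (l + m)))) := key
    _ ≤ m * (2 * τ * (F (u 0) - ⨅ n : ℕ, F (u n))) := by
        refine mul_le_mul_of_nonneg_left ?_ (Nat.cast_nonneg m)
        refine mul_le_mul_of_nonneg_left ?_ hτ2.le
        linarith
    _ = 2 * τ * (m : ℝ) * (F (u 0) - ⨅ n : ℕ, F (u n)) := by ring
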